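/- Counting monic polynomials by number of zeros in a prescribed set: let U be a set of t' = |U| distinct elements of a finite field F with |F| = q. The number of monic polynomials Λ(x) ∈ F[x] with deg Λ(x) < |U| having exactly t zeros in U (counted as distinct roots, 0 ≤ t ≤ |U| − 1) is C(|U|, t)·(q−1)^{|U|−t−1}. -/

import Mathlib

open Polynomial

section Aux

variable {F : Type*} [Field F] [Fintype F] [DecidableEq F]

lemma attach_filter_card {α : Type*} [DecidableEq α] (s : Finset α) (p : α → Prop)
    [DecidablePred p] :
    ((s.attach).filter fun i : ↥s => p i.val).card = (s.filter p).card := by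
  rw [Finset.filter_attach, Finset.card_map, Finset.card_attach]

/-- Functions with zero set exactly `S` correspond to nowhere-zero functions on the
complement of `S`. -/
def zeroSetFiberEquiv (α : Type*) [Fintype α] [DecidableEq α] (S : Finset α) :
    {f : α → F // Finset.univ.filter (fun i => f i = 0) = S} ≃
      ({i : α // i ∉ S} → {x : F // x ≠ 0}) where
  toFun f := fun i => ⟨f.val i.val, by
    have h : i.val ∉ Finset.univ.filter (fun j => f.val j = 0) := by
      rw [f.2]; exact i.2
    simpa using h⟩
  invFun g := ⟨fun i => if h : i ∈ S then 0 else (g ⟨i, h⟩).val, by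
    ext i
    by_cases h : i ∈ S
    · simp [h]
    · simp [h, (g ⟨i, h⟩).2]⟩
  left_inv f := by
    apply Subtype.ext; funext i
    by_cases h : i ∈ S
    · have h2 : i ∈ Finset.univ.filter (fun j => f.val j = 0) := by rw [f.2]; exact h
      simp only [Finset.mem_filter, Finset.mem_univ, true_and] at h2
      simp [h, h2]
    · simp [h]
  right_inv g := by
    funext i
    apply Subtype.ext
    simp [i.2]

lemma card_fun_exact_zeros (α : Type*) [Fintype α] [DecidableEq α] (t : ℕ) :
    Nat.card {f : α → F // (Finset.univ.filter fun i => f i = 0).card = t} =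
      (Fintype.card α).choose t * (Fintype.card F - 1) ^ (Fintype.card α - t) := by
  classical
  rw [Nat.card_eq_fintype_card, Fintype.card_subtype]
  rw [Finset.card_eq_sum_card_fiberwise
    (f := fun f : α → F => Finset.univ.filter (fun i => f i = 0))
    (t := Finset.univ.powersetCard t)
    (fun f hf => by
      simp only [Finset.mem_coe, Finset.mem_filter, Finset.mem_univ, true_and] at hf
      exact Finset.mem_powersetCard.mpr ⟨Finset.subset_univ _, hf⟩)]
  have hfiber : ∀ S ∈ Finset.univ.powersetCard t,
      ((Finset.univ.filter fun f : α → F =>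
          (Finset.univ.filter fun i => f i = 0).card = t).filter
        fun f => Finset.univ.filter (fun i => f i = 0) = S).card =
      (Fintype.card F - 1) ^ (Fintype.card α - t) := by
    intro S hS
    obtain ⟨-, hcard⟩ := Finset.mem_powersetCard.mp hS
    have heq : ((Finset.univ.filter fun f : α → F =>
          (Finset.univ.filter fun i => f i = 0).card = t).filter
        fun f => Finset.univ.filter (fun i => f i = 0) = S) =
        Finset.univ.filter fun f : α → F => Finset.univ.filter (fun i => f i = 0) = S := by
      ext f
      simp only [Finset.mem_filter, Finset.mem_univ, true_and]
      constructor
      · rintro ⟨-, h⟩; exact h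
      · intro h; exact ⟨by rw [h, hcard], h⟩
    rw [heq, ← Fintype.card_subtype, Fintype.card_congr (zeroSetFiberEquiv α S),
      Fintype.card_fun]
    congr 1
    · rw [Fintype.card_subtype_compl, Fintype.card_subtype_eq]
    · rw [Fintype.card_subtype_compl, Fintype.card_coe, hcard]
  rw [Finset.sum_congr rfl hfiber, Finset.sum_const, Finset.card_powersetCard,
    Finset.card_univ, smul_eq_mul]

/-- Evaluation gives a bijection between polynomials of degree `< |U|` with exactly `t`
zeros in `U` and functions `U → F` with exactly `t` zeros. -/
noncomputable def polyFunEquiv (U : Finset F) (t : ℕ) :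
    {Λ : F[X] // Λ.degree < (U.card : WithBot ℕ) ∧
        (U.filter (fun β => Λ.eval β = 0)).card = t} ≃
      {f : ↥U → F // (Finset.univ.filter fun i => f i = 0).card = t} := by
  classical
  have hinj : Set.InjOn (id : F → F) ↑U := Function.injective_id.injOn
  have keyeval : ∀ (f : ↥U → F) (i : ↥U),
      (Lagrange.interpolate U id fun x => if h : x ∈ U then f ⟨x, h⟩ else 0).eval i.val
        = f i := by
    intro f i
    have := Lagrange.eval_interpolate_at_node
      (fun x => if h : x ∈ U then f ⟨x, h⟩ else 0) hinj i.2
    simp only [id_eq] at this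
    rw [this, dif_pos i.2]
  refine
  { toFun := fun Λ => ⟨fun i => Λ.val.eval i.val, by
      have h := Λ.2.2
      rw [← attach_filter_card U (fun β => Λ.val.eval β = 0)] at h
      exact h⟩
    invFun := fun f =>
      ⟨Lagrange.interpolate U id fun x => if h : x ∈ U then f.val ⟨x, h⟩ else 0,
        Lagrange.degree_interpolate_lt _ hinj, ?_⟩
    left_inv := fun Λ => ?_
    right_inv := fun f => ?_ }
  · rw [← attach_filter_card U (fun β =>
      (Lagrange.interpolate U id fun x => if h : x ∈ U then f.val ⟨x, h⟩ else 0).eval β = 0)]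
    rw [show (U.attach.filter fun i : ↥U =>
        (Lagrange.interpolate U id fun x => if h : x ∈ U then f.val ⟨x, h⟩ else 0).eval i.val
          = 0) = U.attach.filter fun i : ↥U => f.val i = 0 from
      Finset.filter_congr fun i _ => by rw [keyeval f.val i]]
    exact f.2
  · apply Subtype.ext
    exact (Lagrange.eq_interpolate_of_eval_eq _ hinj Λ.2.1
      (fun i hi => by simp [dif_pos hi])).symm
  · apply Subtype.ext
    funext i
    exact keyeval f.val i

omit [Fintype F] in
lemma scale_filter_eq (U : Finset F) {c : F} (hc : c ≠ 0) (Λ : F[X]) :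
    U.filter (fun β => (Λ * C c).eval β = 0) = U.filter (fun β => Λ.eval β = 0) :=
  Finset.filter_congr fun β _ => by simp [hc]

/-- Scaling equivalence: monic polynomials with the given conditions, times units,
correspond to all polynomials with the given conditions. -/
noncomputable def monicScaleEquiv (U : Finset F) (t : ℕ) (ht : t + 1 ≤ U.card) :
    {Λ : F[X] // Λ.Monic ∧ Λ.degree < (U.card : WithBot ℕ) ∧
        (U.filter (fun β => Λ.eval β = 0)).card = t} × Fˣ ≃
      {Λ : F[X] // Λ.degree < (U.card : WithBot ℕ) ∧
        (U.filter (fun β => Λ.eval β = 0)).card = t} := by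
  classical
  have hne : ∀ Λ : F[X], Λ.degree < (U.card : WithBot ℕ) →
      (U.filter (fun β => Λ.eval β = 0)).card = t → Λ ≠ 0 := by
    intro Λ _ hcard h0
    rw [h0] at hcard
    simp only [eval_zero, Finset.filter_true, Finset.filter_true_of_mem] at hcard
    omega
  refine
  { toFun := fun p => ⟨p.1.val * C (p.2 : F), by
      constructor
      · rw [degree_mul, degree_C p.2.ne_zero, add_zero]; exact p.1.2.2.1
      · rw [scale_filter_eq U p.2.ne_zero]; exact p.1.2.2.2⟩
    invFun := fun Λ =>
      (⟨Λ.val * C (Λ.val.leadingCoeff)⁻¹, ?_, ?_, ?_⟩,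
        Units.mk0 Λ.val.leadingCoeff
          (leadingCoeff_ne_zero.mpr (hne Λ.val Λ.2.1 Λ.2.2)))
    left_inv := fun p => ?_
    right_inv := fun Λ => ?_ }
  · exact monic_mul_leadingCoeff_inv (hne Λ.val Λ.2.1 Λ.2.2)
  · rw [degree_mul_leadingCoeff_inv _ (hne Λ.val Λ.2.1 Λ.2.2)]; exact Λ.2.1
  · rw [scale_filter_eq U (inv_ne_zero (leadingCoeff_ne_zero.mpr (hne Λ.val Λ.2.1 Λ.2.2)))]
    exact Λ.2.2
  · have hΛne : p.1.val ≠ 0 := p.1.2.1.ne_zero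
    have hlc : (p.1.val * C (p.2 : F)).leadingCoeff = (p.2 : F) := by
      rw [leadingCoeff_mul, leadingCoeff_C, p.1.2.1.leadingCoeff, one_mul]
    refine Prod.ext ?_ ?_
    · apply Subtype.ext
      show p.1.val * C (p.2 : F) * C ((p.1.val * C (p.2 : F)).leadingCoeff)⁻¹ = p.1.val
      rw [hlc, mul_assoc, ← C_mul, mul_inv_cancel₀ p.2.ne_zero, C_1, mul_one]
    · apply Units.ext
      show (p.1.val * C (p.2 : F)).leadingCoeff = (p.2 : F)
      exact hlc
  · apply Subtype.ext
    show Λ.val * C (Λ.val.leadingCoeff)⁻¹ * C Λ.val.leadingCoeff = Λ.val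
    rw [mul_assoc, ← C_mul,
      inv_mul_cancel₀ (leadingCoeff_ne_zero.mpr (hne Λ.val Λ.2.1 Λ.2.2)), C_1, mul_one]

end Aux

/-- Counting monic polynomials by number of zeros in a prescribed set: for a set
`U` of distinct elements of a finite field `F` with `|F| = q` and `0 ≤ t ≤ |U|−1`,
the number of monic polynomials `Λ` with `deg Λ < |U|` having exactly `t` zeros in
`U` equals `C(|U|, t)·(q−1)^{|U|−t−1}`. -/
theorem card_monic_poly_with_t_zeros (F : Type*) [Field F] [Fintype F] [DecidableEq F]
    (U : Finset F) (t : ℕ) (ht : t + 1 ≤ U.card) :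
    Nat.card {Λ : F[X] // Λ.Monic ∧ Λ.degree < (U.card : WithBot ℕ) ∧
        (U.filter (fun β => Λ.eval β = 0)).card = t} =
      Nat.choose U.card t * (Fintype.card F - 1) ^ (U.card - t - 1) := by
  classical
  have hq : 1 < Fintype.card F := Fintype.one_lt_card
  have h1 : Nat.card {Λ : F[X] // Λ.degree < (U.card : WithBot ℕ) ∧
      (U.filter (fun β => Λ.eval β = 0)).card = t} =
      Nat.choose U.card t * (Fintype.card F - 1) ^ (U.card - t) := by
    rw [Nat.card_congr (polyFunEquiv U t), card_fun_exact_zeros, Fintype.card_coe]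
  have h2 := Nat.card_congr (monicScaleEquiv U t ht)
  have hu : Nat.card Fˣ = Fintype.card F - 1 := by
    rw [Nat.card_eq_fintype_card, Fintype.card_units]
  rw [Nat.card_prod, hu, h1] at h2
  have hpow : (Fintype.card F - 1) ^ (U.card - t) =
      (Fintype.card F - 1) ^ (U.card - t - 1) * (Fintype.card F - 1) := by
    rw [← pow_succ]
    congr 1
    omega
  apply Nat.eq_of_mul_eq_mul_right (show 0 < Fintype.card F - 1 by omega)
  rw [h2, hpow, mul_assoc]
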